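/- For any base b ≥ 2 and any natural number n ≥ b, every result m of a partition-and-sum of n that uses at least one actual split (more than one block) satisfies m < n. -/

import Mathlib

lemma sum_le_ofDigits_flatten (b : ℕ) (hb : 1 ≤ b) : ∀ L : List (List ℕ),
    (L.map (fun l => Nat.ofDigits b l)).sum ≤ Nat.ofDigits b L.flatten
  | [] => by simp
  | l :: L => by
    simp only [List.map_cons, List.sum_cons, List.flatten_cons, Nat.ofDigits_append]
    have h := sum_le_ofDigits_flatten b hb L
    have h2 : Nat.ofDigits b L.flatten ≤ b ^ l.length * Nat.ofDigits b L.flatten :=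
      Nat.le_mul_of_pos_left _ (Nat.one_le_pow _ _ hb)
    omega

lemma ofDigits_pos_of_getLast (b : ℕ) (hb : 1 ≤ b) : ∀ l : List ℕ, (h : l ≠ []) →
    l.getLast h ≠ 0 → 0 < Nat.ofDigits b l
  | [a], _, h0 => by simpa [Nat.ofDigits] using Nat.pos_of_ne_zero (by simpa using h0)
  | a :: c :: t, _, h0 => by
    have hrec := ofDigits_pos_of_getLast b hb (c :: t) (by simp)
      (by rwa [List.getLast_cons (by simp)] at h0)
    have : Nat.ofDigits b (a :: c :: t) = a + b * Nat.ofDigits b (c :: t) := by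
      simp [Nat.ofDigits_cons]
    nlinarith

theorem stmt_1 (b n : ℕ) (hb : 2 ≤ b) (hn : b ≤ n)
    (L : List (List ℕ)) (hne : ∀ l ∈ L, l ≠ []) (hsplit : L.flatten = Nat.digits b n)
    (hlen : 2 ≤ L.length) :
    (L.map (fun l => Nat.ofDigits b l)).sum < n := by
  have hb1 : 1 ≤ b := by omega
  have hn0 : n ≠ 0 := by omega
  obtain ⟨l, L', rfl⟩ : ∃ l L', L = l :: L' := by
    cases L with
    | nil => simp at hlen
    | cons a t => exact ⟨a, t, rfl⟩
  have hL' : L' ≠ [] := by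
    cases L' with
    | nil => simp at hlen
    | cons a t => simp
  have hflat : L'.flatten ≠ [] := by
    cases L' with
    | nil => simp at hL'
    | cons a t =>
      have ha : a ≠ [] := hne a (by simp)
      simp only [List.flatten_cons, ne_eq, List.append_eq_nil_iff]
      tauto
  -- last digit of L'.flatten is last digit of digits b n
  have hdig : Nat.digits b n ≠ [] := Nat.digits_ne_nil_iff_ne_zero.mpr hn0
  have hlast : L'.flatten.getLast hflat ≠ 0 := by
    have h2 : (l ++ L'.flatten).getLast? = L'.flatten.getLast? := by
      rw [List.getLast?_append_of_ne_nil _ hflat]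
    have h3 : (l ++ L'.flatten).getLast? = (Nat.digits b n).getLast? := by
      rw [show l ++ L'.flatten = Nat.digits b n from by rw [← hsplit]; simp]
    have h4 : L'.flatten.getLast? = some (L'.flatten.getLast hflat) :=
      List.getLast?_eq_getLast hflat
    have h5 : (Nat.digits b n).getLast? = some ((Nat.digits b n).getLast hdig) :=
      List.getLast?_eq_getLast hdig
    have := Nat.getLast_digit_ne_zero b hn0
    rw [h4, h3, h5] at h2
    simp only [Option.some.injEq] at h2
    rw [← h2]
    exact this
  have hv : 0 < Nat.ofDigits b L'.flatten := ofDigits_pos_of_getLast b hb1 _ hflat hlast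
  have hS : (L'.map (fun l => Nat.ofDigits b l)).sum ≤ Nat.ofDigits b L'.flatten :=
    sum_le_ofDigits_flatten b hb1 L'
  have hl : l ≠ [] := hne l (by simp)
  have hlen1 : 1 ≤ l.length := List.length_pos_iff.mpr hl
  have hpow : b ≤ b ^ l.length := by
    calc b = b ^ 1 := (pow_one b).symm
    _ ≤ b ^ l.length := Nat.pow_le_pow_right (by omega) hlen1
  have hn_eq : n = Nat.ofDigits b l + b ^ l.length * Nat.ofDigits b L'.flatten := by
    conv_lhs => rw [← Nat.ofDigits_digits b n, ← hsplit]
    simp [Nat.ofDigits_append]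
  have hmul : 2 * Nat.ofDigits b L'.flatten ≤ b ^ l.length * Nat.ofDigits b L'.flatten :=
    Nat.mul_le_mul_right _ (by omega)
  simp only [List.map_cons, List.sum_cons]
  omega
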